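/- Let p be an odd prime and n, k positive integers with p^n ≡ 3 (mod 4), and let d be an odd positive integer with d·(p^k+1) ≡ (p^n+1)/2 (mod p^n−1). Then the power function f(x)=x^d on F_{p^n} satisfies _1Δ_f ≤ 6: for every a ∈ F_{p^n} with a ≠ 0 and every b ∈ F_{p^n}, the equation (x+a)^d − x^d = b has at most 6 solutions x ∈ F_{p^n}. -/

import Mathlib

section Aux

variable {F : Type*} [Field F] [Fintype F]

/-- iterated: x ^ (q^j) = x when card F = q -/
lemma aux_pow_pow_card {q : ℕ} (hq : Fintype.card F = q) (x : F) (j : ℕ) :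
    x ^ q ^ j = x := by
  induction j with
  | zero => simp
  | succ j ih => rw [pow_succ, pow_mul, ih, ← hq, FiniteField.pow_card]

lemma aux_charP {p n : ℕ} (hp : p.Prime) (hn : 0 < n)
    (hcard : Fintype.card F = p ^ n) : CharP F p := by
  have h1 : CharP F (ringChar F) := ringChar.charP F
  obtain ⟨m, hr, hc⟩ := FiniteField.card F (ringChar F)
  have hdvd : p ∣ ringChar F ^ (m : ℕ) := by
    rw [← hc, hcard]
    exact dvd_pow_self p hn.ne'
  have : p ∣ ringChar F := hp.dvd_of_dvd_pow hdvd
  have hre : ringChar F = p := ((Nat.prime_dvd_prime_iff_eq hp hr).mp this).symm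
  exact hre ▸ h1

/-- kernel lemma: w^(p^k) = -w forces w = 0 (n odd, char odd). -/
lemma aux_ker {p n k : ℕ} (hn : Odd n) (hpk : Odd (p ^ k))
    (h2 : (2 : F) ≠ 0) (hcard : Fintype.card F = p ^ n)
    {w : F} (hw : w ^ p ^ k = -w) : w = 0 := by
  have key : ∀ j : ℕ, w ^ (p ^ k) ^ j = (-1) ^ j * w := by
    intro j
    induction j with
    | zero => simp
    | succ j ih =>
      rw [pow_succ, pow_mul, ih, mul_pow, hw, ← pow_mul, mul_comm j (p ^ k),
        pow_mul, hpk.neg_one_pow, pow_succ]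
      ring
  have h1 : w ^ (p ^ k) ^ n = w := by
    rw [pow_right_comm]
    exact aux_pow_pow_card hcard w k
  have h2' : w = -w := by
    calc w = w ^ (p ^ k) ^ n := h1.symm
    _ = (-1) ^ n * w := key n
    _ = -w := by rw [hn.neg_one_pow]; ring
  have : 2 * w = 0 := by linear_combination h2'
  rcases mul_eq_zero.mp this with h | h
  · exact absurd h h2
  · exact h

/-- v^(p^k+1) = 1 forces v = ±1. -/
lemma aux_root_one {p n k : ℕ} (hp : p.Prime) (hn : Odd n) (hpk : Odd (p ^ k))
    (h2 : (2 : F) ≠ 0) (hcard : Fintype.card F = p ^ n) [CharP F p]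
    {v : F} (hv : v ^ p ^ k * v = 1) : v = 1 ∨ v = -1 := by
  haveI : Fact p.Prime := ⟨hp⟩
  have hv0 : v ≠ 0 := by
    rintro rfl; simp at hv
  have hσ : v ^ p ^ k = v⁻¹ := eq_inv_of_mul_eq_one_left hv
  set σ : F →+* F := iterateFrobenius F p k with hσdef
  have hσv : σ v = v⁻¹ := by rw [hσdef, iterateFrobenius_def]; exact hσ
  have hw : (v - v⁻¹) ^ p ^ k = -(v - v⁻¹) := by
    have : σ (v - v⁻¹) = v⁻¹ - v := by
      rw [map_sub, hσv, map_inv₀, hσv, inv_inv]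
    rw [← iterateFrobenius_def (R := F) (p := p)]
    rw [show (iterateFrobenius F p k) (v - v⁻¹) = σ (v - v⁻¹) from rfl, this]
    ring
  have := aux_ker hn hpk h2 hcard hw
  have hvv : v = v⁻¹ := by linear_combination this
  have : v * v = 1 := by
    nth_rewrite 1 [hvv]
    exact inv_mul_cancel₀ hv0
  exact mul_self_eq_one_iff.mp this

/-- mod-order congruence power lemma -/
lemma aux_pow_cong {q : ℕ} (hq : Fintype.card F = q) {m m' : ℕ}
    (h : m ≡ m' [MOD q - 1]) {x : F} (hx : x ≠ 0) : x ^ m = x ^ m' := by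
  classical
  set u : Fˣ := Units.mk0 x hx with hu
  have hxu : x = (u : F) := rfl
  have hord : orderOf u ∣ q - 1 := by
    rw [← hq, ← Fintype.card_units]
    exact orderOf_dvd_card
  have : u ^ m = u ^ m' := pow_eq_pow_iff_modEq.mpr (h.of_dvd hord)
  rw [hxu, ← Units.val_pow_eq_pow_val, ← Units.val_pow_eq_pow_val, this]

end Aux


/-- Theorem 3.3 (Theorem `thma`), case `c = 1`, `d` odd: `₁Δ_f ≤ 6`: for every
nonzero `a` and every `b`, the equation `(x+a)^d - x^d = b` has at most 6
solutions in `F_{p^n}`. -/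
theorem stmt_5 (p n k d : ℕ) (hp : p.Prime) (hodd : Odd p)
    (hn0 : 0 < n) (hk0 : 0 < k) (hd0 : 0 < d) (hd : Odd d)
    (hmod : p ^ n % 4 = 3)
    (hcong : d * (p ^ k + 1) ≡ (p ^ n + 1) / 2 [MOD p ^ n - 1])
    (F : Type*) [Field F] [Fintype F] (hcard : Fintype.card F = p ^ n)
    (a b : F) (ha : a ≠ 0) :
    {x : F | (x + a) ^ d - x ^ d = b}.ncard ≤ 6 := by
  classical
  haveI hcharP : CharP F p := aux_charP hp hn0 hcard
  haveI : Fact p.Prime := ⟨hp⟩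
  have hpk_odd : Odd (p ^ k) := hodd.pow
  have hpk0 : p ^ k ≠ 0 := (pow_pos hp.pos k).ne'
  have hp2 : p ≠ 2 := by
    rintro rfl
    exact (by norm_num : ¬ Odd 2) hodd
  have h2 : (2 : F) ≠ 0 := by
    intro h
    have hdvd : p ∣ 2 := (CharP.cast_eq_zero_iff F p 2).mp h
    exact hp2 ((Nat.prime_dvd_prime_iff_eq hp Nat.prime_two).mp hdvd)
  have hn_odd : Odd n := by
    rcases Nat.even_or_odd n with he | ho
    · exfalso
      obtain ⟨m, rfl⟩ := he
      obtain ⟨t, ht⟩ := (hodd.pow : Odd (p ^ m))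
      have hpn : p ^ (m + m) = (2 * t + 1) * (2 * t + 1) := by
        rw [pow_add, ht]
      have hsq : (2 * t + 1) * (2 * t + 1) = 4 * (t * t + t) + 1 := by ring
      omega
    · exact ho
  obtain ⟨m, hm⟩ := (hodd.pow : Odd (p ^ n))
  -- key power relation
  have hrel : ∀ x : F, x ≠ 0 → (x ^ d) ^ p ^ k * x ^ d = x ^ m * x := by
    intro x hx
    have h1 : (x ^ d) ^ p ^ k * x ^ d = x ^ (d * (p ^ k + 1)) := by
      rw [← pow_mul, ← pow_add]
      congr 1
    have hq2 : (p ^ n + 1) / 2 = m + 1 := by omega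
    have h2' : x ^ (d * (p ^ k + 1)) = x ^ (m + 1) :=
      aux_pow_cong hcard (by rw [← hq2]; exact hcong) hx
    rw [h1, h2', pow_succ]
  have hη : ∀ x : F, x ≠ 0 → x ^ m = 1 ∨ x ^ m = -1 := by
    intro x hx
    have hc : x ^ m * x ^ m = 1 := by
      rw [← pow_add]
      have hmm : m + m = p ^ n - 1 := by omega
      rw [hmm, ← hcard]
      exact FiniteField.pow_card_sub_one_eq_one x hx
    exact mul_self_eq_one_iff.mp hc
  -- injectivity of x ↦ x^d
  have hinj : Function.Injective fun x : F => x ^ d := by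
    intro x z hxz
    simp only at hxz
    by_cases hx : x = 0
    · subst hx
      have hz0 : z ^ d = 0 := by rw [← hxz]; exact zero_pow hd0.ne'
      exact ((pow_eq_zero_iff hd0.ne').mp hz0).symm
    by_cases hz : z = 0
    · subst hz
      have hx0 : x ^ d = 0 := by rw [hxz]; exact zero_pow hd0.ne'
      exact (pow_eq_zero_iff hd0.ne').mp hx0
    have h1 := hrel x hx
    have h2' := hrel z hz
    rw [hxz] at h1
    have hxz2 : x ^ m * x = z ^ m * z := by rw [← h1, ← h2']
    have hcontr : ∀ y : F, y ≠ 0 → y ^ d ≠ (-y) ^ d := by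
      intro y hy hcon
      rw [hd.neg_pow] at hcon
      have : (2 : F) * y ^ d = 0 := by linear_combination hcon
      rcases mul_eq_zero.mp this with h | h
      · exact h2 h
      · exact hy ((pow_eq_zero_iff hd0.ne').mp h)
    rcases hη x hx with e1 | e1 <;> rcases hη z hz with e2 | e2 <;>
        rw [e1, e2] at hxz2
    · linear_combination hxz2
    · exfalso
      have hxe : x = -z := by linear_combination hxz2
      rw [hxe] at hxz
      exact hcontr z hz hxz.symm
    · exfalso
      have hxe : z = -x := by linear_combination -hxz2
      rw [hxe] at hxz
      exact hcontr x hx hxz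
    · linear_combination -hxz2
  -- counting: linear sets have at most one element
  have hE : ∀ r : F, (b = 0 → r ≠ 0) →
      {s : F | b * s ^ p ^ k + b ^ p ^ k * s = r}.ncard ≤ 1 := by
    intro r hr
    by_cases hb : b = 0
    · have hempty : {s : F | b * s ^ p ^ k + b ^ p ^ k * s = r} = ∅ := by
        ext s
        simp only [Set.mem_setOf_eq, Set.mem_empty_iff_false, iff_false]
        rw [hb]
        rw [zero_pow hpk0]
        simp only [zero_mul, mul_zero, add_zero]
        exact fun h => (hr hb) h.symm
      simp [hempty]
    · have hss : {s : F | b * s ^ p ^ k + b ^ p ^ k * s = r}.Subsingleton := by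
        intro s1 hs1 s2 hs2
        simp only [Set.mem_setOf_eq] at hs1 hs2
        have hsb : b ^ p ^ k ≠ 0 := pow_ne_zero _ hb
        have hexp : (s1 - s2) ^ p ^ k = s1 ^ p ^ k - s2 ^ p ^ k := by
          have := map_sub (iterateFrobenius F p k) s1 s2
          simpa [iterateFrobenius_def] using this
        have hwk : ((s1 - s2) * b⁻¹) ^ p ^ k = -((s1 - s2) * b⁻¹) := by
          rw [mul_pow, hexp, inv_pow]
          field_simp
          linear_combination hs1 - hs2
        have hw0 := aux_ker hn_odd hpk_odd h2 hcard hwk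
        have hs12 : s1 - s2 = 0 := by
          rcases mul_eq_zero.mp hw0 with h | h
          · exact h
          · exact absurd h (inv_ne_zero hb)
        linear_combination hs12
      rcases hss.eq_empty_or_singleton with h | ⟨x, h⟩
      · simp [h]
      · simp [h]
  -- counting: 'square-like' sets have at most two elements
  have hM : ∀ c : F, {s : F | (2 * s + b) ^ p ^ k * (2 * s + b) = c}.ncard ≤ 2 := by
    intro c
    by_cases hne : {s : F | (2 * s + b) ^ p ^ k * (2 * s + b) = c}.Nonempty
    · obtain ⟨s1, hs1⟩ := hne
      simp only [Set.mem_setOf_eq] at hs1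
      have hsub : {s : F | (2 * s + b) ^ p ^ k * (2 * s + b) = c} ⊆ {s1, -s1 - b} := by
        intro s2 hs2
        simp only [Set.mem_setOf_eq] at hs2
        simp only [Set.mem_insert_iff, Set.mem_singleton_iff]
        by_cases hv1 : 2 * s1 + b = 0
        · left
          have hc : c = 0 := by rw [← hs1, hv1, zero_pow hpk0, zero_mul]
          have hv2 : 2 * s2 + b = 0 := by
            have h0 : (2 * s2 + b) ^ p ^ k * (2 * s2 + b) = 0 := by rw [hs2, hc]
            rcases mul_eq_zero.mp h0 with h' | h'
            · exact (pow_eq_zero_iff hpk0).mp h'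
            · exact h'
          have : (2:F) * s2 = 2 * s1 := by linear_combination hv2 - hv1
          exact mul_left_cancel₀ h2 this
        · have hv2 : 2 * s2 + b ≠ 0 := by
            intro h
            apply hv1
            have hc : c = 0 := by rw [← hs2, h, zero_pow hpk0, zero_mul]
            have h0 : (2 * s1 + b) ^ p ^ k * (2 * s1 + b) = 0 := by rw [hs1, hc]
            rcases mul_eq_zero.mp h0 with h' | h'
            · exact (pow_eq_zero_iff hpk0).mp h'
            · exact h'
          have hroot : ((2 * s2 + b) * (2 * s1 + b)⁻¹) ^ p ^ k *
              ((2 * s2 + b) * (2 * s1 + b)⁻¹) = 1 := by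
            rw [mul_pow, inv_pow]
            field_simp
            linear_combination hs2 - hs1
          rcases aux_root_one hp hn_odd hpk_odd h2 hcard hroot with h | h
          · left
            rw [mul_inv_eq_one₀ hv1] at h
            have h' : (2:F) * s2 = 2 * s1 := by linear_combination h
            exact mul_left_cancel₀ h2 h'
          · right
            have hvv : 2 * s2 + b = -(2 * s1 + b) := by
              field_simp at h
              linear_combination h
            have h4 : (2:F) * s2 = 2 * (-s1 - b) := by linear_combination hvv
            exact mul_left_cancel₀ h2 h4
      calc {s : F | (2 * s + b) ^ p ^ k * (2 * s + b) = c}.ncard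
          ≤ ({s1, -s1 - b} : Set F).ncard := Set.ncard_le_ncard hsub (Set.toFinite _)
        _ ≤ 2 := by
            apply (Set.ncard_insert_le _ _).trans
            simp
    · rw [Set.not_nonempty_iff_eq_empty] at hne
      simp [hne]
  set E1 : Set F := {s | b * s ^ p ^ k + b ^ p ^ k * s = a - b ^ p ^ k * b} with hE1d
  set E2 : Set F := {s | b * s ^ p ^ k + b ^ p ^ k * s = -a - b ^ p ^ k * b} with hE2d
  set M1 : Set F := {s | (2 * s + b) ^ p ^ k * (2 * s + b) = -(2 * a) - b ^ p ^ k * b}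
    with hM1d
  set M2 : Set F := {s | (2 * s + b) ^ p ^ k * (2 * s + b) = 2 * a - b ^ p ^ k * b}
    with hM2d
  have hadd : ∀ u v : F, (u + v) ^ p ^ k = u ^ p ^ k + v ^ p ^ k := by
    intro u v
    have := map_add (iterateFrobenius F p k) u v
    simpa [iterateFrobenius_def] using this
  have h2pk : (2 : F) ^ p ^ k = 2 := by
    have := map_ofNat (iterateFrobenius F p k) 2
    simpa [iterateFrobenius_def] using this
  have hmem : ∀ x : F, (x + a) ^ d - x ^ d = b →
      x ^ d ∈ E1 ∪ E2 ∪ M1 ∪ M2 := by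
    intro x hx
    simp only [hE1d, hE2d, hM1d, hM2d, Set.mem_union, Set.mem_setOf_eq]
    by_cases hx0 : x = 0
    · subst hx0
      rw [zero_pow hd0.ne', sub_zero, zero_add] at hx
      rw [zero_pow hd0.ne']
      have hb : b ^ p ^ k * b = a ^ m * a := by rw [← hx]; exact hrel a ha
      rw [zero_pow hpk0]
      rcases hη a ha with e | e <;> rw [e] at hb
      · exact Or.inl (Or.inl (Or.inl (by linear_combination hb)))
      · exact Or.inl (Or.inl (Or.inr (by linear_combination hb)))
    by_cases hxa : x + a = 0
    · have h0 : (x + a) ^ d = 0 := by rw [hxa]; exact zero_pow hd0.ne'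
      have hxd : x ^ d = -b := by linear_combination h0 - hx
      have hxe : x = -a := by linear_combination hxa
      have hba : b = a ^ d := by
        rw [hxe, hd.neg_pow] at hxd
        linear_combination hxd
      have hb : b ^ p ^ k * b = a ^ m * a := by rw [hba]; exact hrel a ha
      rw [hxd, hpk_odd.neg_pow]
      rcases hη a ha with e | e <;> rw [e] at hb
      · exact Or.inl (Or.inl (Or.inr (by linear_combination -hb)))
      · exact Or.inl (Or.inl (Or.inl (by linear_combination -hb)))
    · have h1 := hrel x hx0
      have hsb : (x + a) ^ d = x ^ d + b := by linear_combination hx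
      have h2' : (x ^ d + b) ^ p ^ k * (x ^ d + b) = (x + a) ^ m * (x + a) := by
        rw [← hsb]; exact hrel _ hxa
      have hEe : (x ^ d + b) ^ p ^ k = (x ^ d) ^ p ^ k + b ^ p ^ k := hadd _ _
      have hB : (2 * x ^ d + b) ^ p ^ k = 2 * (x ^ d) ^ p ^ k + b ^ p ^ k := by
        rw [hadd (2 * x ^ d) b, mul_pow, h2pk]
      rcases hη x hx0 with e1 | e1 <;> rcases hη (x + a) hxa with e2 | e2 <;>
        rw [e1] at h1 <;> rw [e2] at h2'
      · refine Or.inl (Or.inl (Or.inl ?_))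
        linear_combination h2' - h1 - (x ^ d + b) * hEe
      · refine Or.inl (Or.inr ?_)
        linear_combination 2 * h2' + 2 * h1 + (2 * x ^ d + b) * hB -
          2 * (x ^ d + b) * hEe
      · refine Or.inr ?_
        linear_combination 2 * h2' + 2 * h1 + (2 * x ^ d + b) * hB -
          2 * (x ^ d + b) * hEe
      · refine Or.inl (Or.inl (Or.inr ?_))
        linear_combination h2' - h1 - (x ^ d + b) * hEe
  have hc1 : E1.ncard ≤ 1 := by
    rw [hE1d]
    refine hE _ (fun hb0 => ?_)
    rw [hb0, zero_pow hpk0]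
    simpa using ha
  have hc2 : E2.ncard ≤ 1 := by
    rw [hE2d]
    refine hE _ (fun hb0 => ?_)
    rw [hb0, zero_pow hpk0]
    simpa using ha
  have hc3 : M1.ncard ≤ 2 := by rw [hM1d]; exact hM _
  have hc4 : M2.ncard ≤ 2 := by rw [hM2d]; exact hM _
  have hsub : (fun x : F => x ^ d) '' {x : F | (x + a) ^ d - x ^ d = b} ⊆
      E1 ∪ E2 ∪ M1 ∪ M2 := by
    rintro _ ⟨x, hx, rfl⟩
    exact hmem x hx
  have himg : ((fun x : F => x ^ d) '' {x : F | (x + a) ^ d - x ^ d = b}).ncard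
      = {x : F | (x + a) ^ d - x ^ d = b}.ncard :=
    Set.ncard_image_of_injective _ hinj
  have hu : (E1 ∪ E2 ∪ M1 ∪ M2).ncard ≤ E1.ncard + E2.ncard + M1.ncard + M2.ncard := by
    calc (E1 ∪ E2 ∪ M1 ∪ M2).ncard
        ≤ (E1 ∪ E2 ∪ M1).ncard + M2.ncard := Set.ncard_union_le _ _
      _ ≤ ((E1 ∪ E2).ncard + M1.ncard) + M2.ncard :=
          Nat.add_le_add_right (Set.ncard_union_le _ _) _
      _ ≤ ((E1.ncard + E2.ncard) + M1.ncard) + M2.ncard :=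
          Nat.add_le_add_right (Nat.add_le_add_right (Set.ncard_union_le _ _) _) _
  have hfin : ({x : F | (x + a) ^ d - x ^ d = b}).ncard ≤
      (E1 ∪ E2 ∪ M1 ∪ M2).ncard := by
    rw [← himg]
    exact Set.ncard_le_ncard hsub (Set.toFinite _)
  omega
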